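/- Let C be a monoidal dagger category. The equivalence between Frobenius monoids in C and strong Frobenius monads on C given by B ↦ − ⊗ B and T ↦ T(I) restricts to an equivalence between special Frobenius monoids in C and special strong Frobenius monads on C: if B is a special Frobenius monoid then − ⊗ B is a special strong Frobenius monad, and if T is a special strong Frobenius monad then T(I) is a special Frobenius monoid. -/

import Mathlib

open CategoryTheory Category MonoidalCategory

universe v u

/-- A dagger structure on a category: a contravariant, identity-on-objects,
involutive operation on morphisms. -/
class DaggerStruct (C : Type u) [Category.{v} C] where
  dag : ∀ {X Y : C}, (X ⟶ Y) → (Y ⟶ X)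
  dag_dag : ∀ {X Y : C} (f : X ⟶ Y), dag (dag f) = f
  dag_id : ∀ X : C, dag (𝟙 X) = 𝟙 X
  dag_comp : ∀ {X Y Z : C} (f : X ⟶ Y) (g : Y ⟶ Z), dag (f ≫ g) = dag g ≫ dag f

notation:max f "†" => DaggerStruct.dag f

/-- A monoidal dagger category: the dagger cooperates with the monoidal structure. -/
class MonoidalDagger (C : Type u) [Category.{v} C] [MonoidalCategory C] extends
    DaggerStruct C where
  dag_tensor : ∀ {X₁ Y₁ X₂ Y₂ : C} (f : X₁ ⟶ Y₁) (g : X₂ ⟶ Y₂), (f ⊗ₘ g)† = f† ⊗ₘ g†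
  assoc_unitary : ∀ X Y Z : C, ((α_ X Y Z).hom)† = (α_ X Y Z).inv
  lunitor_unitary : ∀ X : C, ((λ_ X).hom)† = (λ_ X).inv
  runitor_unitary : ∀ X : C, ((ρ_ X).hom)† = (ρ_ X).inv

/-- A symmetric monoidal dagger category: additionally the symmetries are unitary. -/
class SymmetricDagger (C : Type u) [Category.{v} C] [MonoidalCategory C]
    [SymmetricCategory C] extends MonoidalDagger C where
  braiding_unitary : ∀ X Y : C, ((β_ X Y).hom)† = (β_ X Y).inv

/-- A monoid object, given by explicit data. -/
structure IsMonoidObj {C : Type u} [Category.{v} C] [MonoidalCategory C] (A : C)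
    (m : A ⊗ A ⟶ A) (u : 𝟙_ C ⟶ A) : Prop where
  mul_assoc : (m ⊗ₘ 𝟙 A) ≫ m = (α_ A A A).hom ≫ (𝟙 A ⊗ₘ m) ≫ m
  one_mul : (u ⊗ₘ 𝟙 A) ≫ m = (λ_ A).hom
  mul_one : (𝟙 A ⊗ₘ u) ≫ m = (ρ_ A).hom

/-- A Frobenius monoid in a monoidal dagger category. -/
structure IsFrobeniusMonoid {C : Type u} [Category.{v} C] [MonoidalCategory C]
    [MonoidalDagger C] (A : C) (m : A ⊗ A ⟶ A) (u : 𝟙_ C ⟶ A) extends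
    IsMonoidObj A m u : Prop where
  frobenius : (m† ⊗ₘ 𝟙 A) ≫ (α_ A A A).hom ≫ (𝟙 A ⊗ₘ m) =
    (𝟙 A ⊗ₘ m†) ≫ (α_ A A A).inv ≫ (m ⊗ₘ 𝟙 A)

/-- A Frobenius monad on a dagger category. -/
structure IsFrobeniusMonad {C : Type u} [Category.{v} C] [DaggerStruct C]
    (T : Monad C) : Prop where
  map_dag : ∀ {X Y : C} (f : X ⟶ Y), T.map (f†) = (T.map f)†
  frobenius : ∀ A : C,
    ((T.μ.app (T.obj A))†) ≫ T.map (T.μ.app A) =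
      T.map ((T.μ.app A)†) ≫ T.μ.app (T.obj A)

variable {C : Type u} [Category.{v} C] [MonoidalCategory C]

/-- Multiplication `μ_A = (id_A ⊗ m) ∘ α_{A,B,B}` of the writer monad `− ⊗ B`. -/
def wMu (B : C) (m : B ⊗ B ⟶ B) (A : C) : (A ⊗ B) ⊗ B ⟶ A ⊗ B :=
  (α_ A B B).hom ≫ (𝟙 A ⊗ₘ m)

/-- Unit `η_A = (id_A ⊗ u) ∘ ρ_A⁻¹` of the writer monad `− ⊗ B`. -/
def wEta (B : C) (u : 𝟙_ C ⟶ B) (A : C) : A ⟶ A ⊗ B :=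
  (ρ_ A).inv ≫ (𝟙 A ⊗ₘ u)

/-- Strength `st_{X,A} : X ⊗ (A ⊗ B) ⟶ (X ⊗ A) ⊗ B` of the writer monad, given by the
associator. -/
def wSt (B : C) (X A : C) : X ⊗ (A ⊗ B) ⟶ (X ⊗ A) ⊗ B :=
  (α_ X A B).inv

/-- A strong Frobenius monad on a monoidal dagger category: a Frobenius monad `T` that is
simultaneously a strong monad, with every strength map `st_{X,Y}` unitary. -/
structure IsStrongFrobeniusMonad {C : Type u} [Category.{v} C] [MonoidalCategory C]
    [MonoidalDagger C] (T : Monad C)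
    (st : ∀ X Y : C, X ⊗ T.obj Y ⟶ T.obj (X ⊗ Y)) : Prop where
  map_dag : ∀ {X Y : C} (f : X ⟶ Y), T.map (f†) = (T.map f)†
  frobenius : ∀ A : C,
    ((T.μ.app (T.obj A))†) ≫ T.map (T.μ.app A) =
      T.map ((T.μ.app A)†) ≫ T.μ.app (T.obj A)
  st_natural : ∀ {X X' Y Y' : C} (f : X ⟶ X') (g : Y ⟶ Y'),
    (f ⊗ₘ T.map g) ≫ st X' Y' = st X Y ≫ T.map (f ⊗ₘ g)
  st_assoc : ∀ X Y Z : C,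
    (α_ X Y (T.obj Z)).inv ≫ st (X ⊗ Y) Z =
      (𝟙 X ⊗ₘ st Y Z) ≫ st X (Y ⊗ Z) ≫ T.map (α_ X Y Z).inv
  st_lunit : ∀ A : C, st (𝟙_ C) A ≫ T.map (λ_ A).hom = (λ_ (T.obj A)).hom
  st_mu : ∀ X A : C,
    (𝟙 X ⊗ₘ T.μ.app A) ≫ st X A =
      st X (T.obj A) ≫ T.map (st X A) ≫ T.μ.app (X ⊗ A)
  st_eta : ∀ X A : C, (𝟙 X ⊗ₘ T.η.app A) ≫ st X A = T.η.app (X ⊗ A)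
  st_unitary₁ : ∀ X Y : C, st X Y ≫ ((st X Y)†) = 𝟙 (X ⊗ T.obj Y)
  st_unitary₂ : ∀ X Y : C, ((st X Y)†) ≫ st X Y = 𝟙 (T.obj (X ⊗ Y))

/-- The multiplication `μ_I ∘ T(ρ_{T(I)}) ∘ st_{T(I),I}` on `T(I)` for a strong monad. -/
def tMul {C : Type u} [Category.{v} C] [MonoidalCategory C] (T : Monad C)
    (st : ∀ X Y : C, X ⊗ T.obj Y ⟶ T.obj (X ⊗ Y)) :
    T.obj (𝟙_ C) ⊗ T.obj (𝟙_ C) ⟶ T.obj (𝟙_ C) :=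
  st (T.obj (𝟙_ C)) (𝟙_ C) ≫ T.map (ρ_ (T.obj (𝟙_ C))).hom ≫ T.μ.app (𝟙_ C)


section SpecialAux

open DaggerStruct MonoidalDagger

lemma rho_triangle {C : Type u} [Category.{v} C] [MonoidalCategory C] (X Y : C) :
    (α_ X Y (𝟙_ C)).hom ≫ (𝟙 X ⊗ₘ (ρ_ Y).hom) = (ρ_ (X ⊗ Y)).hom := by
  coherence

variable {C : Type u} [Category.{v} C] [MonoidalCategory C] [MonoidalDagger C]

lemma wMu_dag (B : C) (m : B ⊗ B ⟶ B) (A : C) :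
    (wMu B m A)† = (𝟙 A ⊗ₘ m†) ≫ (α_ A B B).inv := by
  rw [wMu, dag_comp, dag_tensor, dag_id, assoc_unitary]

lemma part1a (B : C) (m : B ⊗ B ⟶ B) (u : 𝟙_ C ⟶ B) (hB : IsFrobeniusMonoid B m u)
    (A : C) :
    ((wMu B m (A ⊗ B))†) ≫ (wMu B m A ⊗ₘ 𝟙 B) =
      ((wMu B m A)† ⊗ₘ 𝟙 B) ≫ wMu B m (A ⊗ B) := by
  rw [wMu_dag, wMu_dag, wMu, wMu, comp_tensor_id, comp_tensor_id]
  have e1 : (𝟙 (A ⊗ B) ⊗ₘ m†) =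
      (α_ A B B).hom ≫ (𝟙 A ⊗ₘ (𝟙 B ⊗ₘ m†)) ≫ (α_ A B (B ⊗ B)).inv := by
    rw [associator_inv_naturality, Iso.hom_inv_id_assoc, id_tensorHom_id]
  have e2 : ((𝟙 A ⊗ₘ m) ⊗ₘ 𝟙 B) =
      (α_ A (B ⊗ B) B).hom ≫ (𝟙 A ⊗ₘ (m ⊗ₘ 𝟙 B)) ≫ (α_ A B B).inv := by
    rw [associator_inv_naturality, Iso.hom_inv_id_assoc]
  have e3 : ((𝟙 A ⊗ₘ m†) ⊗ₘ 𝟙 B) =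
      (α_ A B B).hom ≫ (𝟙 A ⊗ₘ (m† ⊗ₘ 𝟙 B)) ≫ (α_ A (B ⊗ B) B).inv := by
    rw [associator_inv_naturality, Iso.hom_inv_id_assoc]
  have e4 : (𝟙 (A ⊗ B) ⊗ₘ m) =
      (α_ A B (B ⊗ B)).hom ≫ (𝟙 A ⊗ₘ (𝟙 B ⊗ₘ m)) ≫ (α_ A B B).inv := by
    rw [associator_inv_naturality, Iso.hom_inv_id_assoc, id_tensorHom_id]
  rw [e1, e2, e3, e4]
  have SS1 : (α_ A B (B ⊗ B)).inv ≫ (α_ (A ⊗ B) B B).inv ≫ ((α_ A B B).hom ⊗ₘ 𝟙 B) ≫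
      (α_ A (B ⊗ B) B).hom = 𝟙 A ⊗ₘ (α_ B B B).inv := by
    coherence
  have SS2 : (α_ A (B ⊗ B) B).inv ≫ ((α_ A B B).inv ⊗ₘ 𝟙 B) ≫ (α_ (A ⊗ B) B B).hom ≫
      (α_ A B (B ⊗ B)).hom = 𝟙 A ⊗ₘ (α_ B B B).hom := by
    coherence
  simp only [assoc]
  slice_lhs 3 6 => rw [SS1]
  slice_rhs 3 6 => rw [SS2]
  slice_lhs 2 4 => rw [← id_tensor_comp, ← id_tensor_comp]
  slice_rhs 2 4 => rw [← id_tensor_comp, ← id_tensor_comp]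
  rw [← hB.frobenius]

lemma part1b (B : C) (m : B ⊗ B ⟶ B) (hs : (m†) ≫ m = 𝟙 B) (A : C) :
    ((wMu B m A)†) ≫ wMu B m A = 𝟙 (A ⊗ B) := by
  rw [wMu_dag, wMu]
  simp only [assoc, Iso.inv_hom_id_assoc]
  rw [← id_tensor_comp, hs, id_tensorHom_id]

/-- The comparison map `T(I) ⊗ T(I) ⟶ T(T(I))`. -/
def psi {C : Type u} [Category.{v} C] [MonoidalCategory C] (T : Monad C)
    (st : ∀ X Y : C, X ⊗ T.obj Y ⟶ T.obj (X ⊗ Y)) :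
    T.obj (𝟙_ C) ⊗ T.obj (𝟙_ C) ⟶ T.obj (T.obj (𝟙_ C)) :=
  st (T.obj (𝟙_ C)) (𝟙_ C) ≫ T.map (ρ_ (T.obj (𝟙_ C))).hom

variable (T : Monad C) (st : ∀ X Y : C, X ⊗ T.obj Y ⟶ T.obj (X ⊗ Y))

lemma tMul_eq : tMul T st = psi T st ≫ T.μ.app (𝟙_ C) := by
  rw [tMul, psi, assoc]

variable {T st}

lemma psi_dag (h : IsStrongFrobeniusMonad T st) :
    (psi T st)† = T.map (ρ_ (T.obj (𝟙_ C))).inv ≫ (st (T.obj (𝟙_ C)) (𝟙_ C))† := by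
  rw [psi, dag_comp, ← h.map_dag, runitor_unitary]

lemma psi_psi_dag (h : IsStrongFrobeniusMonad T st) :
    psi T st ≫ (psi T st)† = 𝟙 _ := by
  rw [psi_dag h, psi, assoc, ← Functor.map_comp_assoc, Iso.hom_inv_id,
    CategoryTheory.Functor.map_id, id_comp, h.st_unitary₁]

lemma psi_dag_psi (h : IsStrongFrobeniusMonad T st) :
    (psi T st)† ≫ psi T st = 𝟙 _ := by
  rw [psi_dag h, psi, assoc]
  slice_lhs 2 3 => rw [h.st_unitary₂]
  simp [← Functor.map_comp]

lemma st_assoc' (h : IsStrongFrobeniusMonad T st) :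
    (𝟙 (T.obj (𝟙_ C)) ⊗ₘ st (T.obj (𝟙_ C)) (𝟙_ C)) ≫
        st (T.obj (𝟙_ C)) (T.obj (𝟙_ C) ⊗ 𝟙_ C) =
      (α_ (T.obj (𝟙_ C)) (T.obj (𝟙_ C)) (T.obj (𝟙_ C))).inv ≫
        st (T.obj (𝟙_ C) ⊗ T.obj (𝟙_ C)) (𝟙_ C) ≫
          T.map (α_ (T.obj (𝟙_ C)) (T.obj (𝟙_ C)) (𝟙_ C)).hom := by
  rw [← cancel_mono (T.map (α_ (T.obj (𝟙_ C)) (T.obj (𝟙_ C)) (𝟙_ C)).inv), assoc, assoc,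
    ← h.st_assoc]
  simp [← Functor.map_comp]

lemma lemA (h : IsStrongFrobeniusMonad T st) :
    (α_ (T.obj (𝟙_ C)) (T.obj (𝟙_ C)) (T.obj (𝟙_ C))).hom ≫
        (𝟙 (T.obj (𝟙_ C)) ⊗ₘ tMul T st) ≫ psi T st =
      st (T.obj (𝟙_ C) ⊗ T.obj (𝟙_ C)) (𝟙_ C) ≫
        T.map (ρ_ (T.obj (𝟙_ C) ⊗ T.obj (𝟙_ C))).hom ≫ T.map (psi T st) ≫
          T.μ.app (T.obj (𝟙_ C)) := by
  rw [tMul, psi]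
  simp only [id_tensor_comp]
  slice_lhs 4 5 => rw [h.st_mu]
  slice_lhs 3 4 => rw [h.st_natural]
  slice_lhs 6 7 => rw [← T.μ.naturality]
  slice_lhs 2 3 => rw [st_assoc' h]
  simp only [assoc]
  rw [Iso.hom_inv_id_assoc]
  slice_lhs 2 3 => rw [← Functor.map_comp, rho_triangle]
  simp [Functor.comp_map]

lemma lemB (h : IsStrongFrobeniusMonad T st) :
    (tMul T st ⊗ₘ 𝟙 (T.obj (𝟙_ C))) ≫ psi T st =
      st (T.obj (𝟙_ C) ⊗ T.obj (𝟙_ C)) (𝟙_ C) ≫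
        T.map (ρ_ (T.obj (𝟙_ C) ⊗ T.obj (𝟙_ C))).hom ≫ T.map (tMul T st) := by
  rw [psi]
  rw [show (𝟙 (T.obj (𝟙_ C)) : T.obj (𝟙_ C) ⟶ T.obj (𝟙_ C)) = T.map (𝟙 (𝟙_ C)) from
    (T.map_id _).symm]
  slice_lhs 1 2 => rw [h.st_natural]
  slice_lhs 2 3 => rw [← Functor.map_comp, tensorHom_id, rightUnitor_naturality,
    Functor.map_comp]

lemma tmul_assoc (h : IsStrongFrobeniusMonad T st) :
    (tMul T st ⊗ₘ 𝟙 (T.obj (𝟙_ C))) ≫ tMul T st =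
      (α_ (T.obj (𝟙_ C)) (T.obj (𝟙_ C)) (T.obj (𝟙_ C))).hom ≫
        (𝟙 (T.obj (𝟙_ C)) ⊗ₘ tMul T st) ≫ tMul T st := by
  have h1 : (tMul T st ⊗ₘ 𝟙 (T.obj (𝟙_ C))) ≫ tMul T st =
      ((tMul T st ⊗ₘ 𝟙 (T.obj (𝟙_ C))) ≫ psi T st) ≫ T.μ.app (𝟙_ C) := by
    rw [assoc, ← tMul_eq]
  have h2 : (α_ (T.obj (𝟙_ C)) (T.obj (𝟙_ C)) (T.obj (𝟙_ C))).hom ≫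
      (𝟙 (T.obj (𝟙_ C)) ⊗ₘ tMul T st) ≫ tMul T st =
      ((α_ (T.obj (𝟙_ C)) (T.obj (𝟙_ C)) (T.obj (𝟙_ C))).hom ≫
        (𝟙 (T.obj (𝟙_ C)) ⊗ₘ tMul T st) ≫ psi T st) ≫ T.μ.app (𝟙_ C) := by
    simp only [assoc]
    rw [← tMul_eq]
  rw [h1, h2, lemB h, lemA h]
  rw [tMul_eq, Functor.map_comp]
  simp only [assoc]
  rw [Monad.assoc]

lemma one_tmul (h : IsStrongFrobeniusMonad T st) :
    (T.η.app (𝟙_ C) ⊗ₘ 𝟙 (T.obj (𝟙_ C))) ≫ tMul T st = (λ_ (T.obj (𝟙_ C))).hom := by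
  rw [tMul]
  rw [show (𝟙 (T.obj (𝟙_ C)) : T.obj (𝟙_ C) ⟶ T.obj (𝟙_ C)) = T.map (𝟙 (𝟙_ C)) from
    (T.map_id _).symm]
  slice_lhs 1 2 => rw [h.st_natural]
  slice_lhs 2 3 => rw [← Functor.map_comp, tensorHom_id, rightUnitor_naturality,
    Functor.map_comp]
  slice_lhs 3 4 => rw [T.right_unit]
  simp only [Functor.id_obj, comp_id, ← unitors_equal, h.st_lunit]

lemma tmul_one (h : IsStrongFrobeniusMonad T st) :
    (𝟙 (T.obj (𝟙_ C)) ⊗ₘ T.η.app (𝟙_ C)) ≫ tMul T st = (ρ_ (T.obj (𝟙_ C))).hom := by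
  rw [tMul]
  slice_lhs 1 2 => rw [h.st_eta]
  slice_lhs 1 2 => rw [← T.η.naturality]
  simp [T.left_unit]

lemma tmul_dag_psi (h : IsStrongFrobeniusMonad T st) :
    (tMul T st)† ≫ psi T st = (T.μ.app (𝟙_ C))† := by
  rw [tMul_eq, dag_comp, assoc, psi_dag_psi h, comp_id]

lemma key_step (h : IsStrongFrobeniusMonad T st) :
    ((tMul T st)† ⊗ₘ 𝟙 (T.obj (𝟙_ C))) ≫
        (α_ (T.obj (𝟙_ C)) (T.obj (𝟙_ C)) (T.obj (𝟙_ C))).hom ≫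
          (𝟙 (T.obj (𝟙_ C)) ⊗ₘ tMul T st) ≫ psi T st =
      psi T st ≫ T.map ((T.μ.app (𝟙_ C))†) ≫ T.μ.app (T.obj (𝟙_ C)) := by
  rw [lemA h]
  rw [show (𝟙 (T.obj (𝟙_ C)) : T.obj (𝟙_ C) ⟶ T.obj (𝟙_ C)) = T.map (𝟙 (𝟙_ C)) from
    (T.map_id _).symm]
  slice_lhs 1 2 => rw [h.st_natural]
  slice_lhs 2 3 => rw [← Functor.map_comp, tensorHom_id, rightUnitor_naturality,
    Functor.map_comp]
  slice_lhs 3 4 => rw [← Functor.map_comp, tmul_dag_psi h]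
  rw [psi]
  simp only [assoc]

lemma key (h : IsStrongFrobeniusMonad T st) :
    ((tMul T st)† ⊗ₘ 𝟙 (T.obj (𝟙_ C))) ≫
        (α_ (T.obj (𝟙_ C)) (T.obj (𝟙_ C)) (T.obj (𝟙_ C))).hom ≫
          (𝟙 (T.obj (𝟙_ C)) ⊗ₘ tMul T st) =
      psi T st ≫ T.map ((T.μ.app (𝟙_ C))†) ≫ T.μ.app (T.obj (𝟙_ C)) ≫ (psi T st)† := by
  have hiso : IsIso (psi T st) := ⟨(psi T st)†, psi_psi_dag h, psi_dag_psi h⟩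
  rw [← cancel_mono (psi T st)]
  simp only [assoc]
  rw [psi_dag_psi h, comp_id]
  exact key_step h

lemma tmul_frob (h : IsStrongFrobeniusMonad T st) :
    ((tMul T st)† ⊗ₘ 𝟙 (T.obj (𝟙_ C))) ≫
        (α_ (T.obj (𝟙_ C)) (T.obj (𝟙_ C)) (T.obj (𝟙_ C))).hom ≫
          (𝟙 (T.obj (𝟙_ C)) ⊗ₘ tMul T st) =
      (𝟙 (T.obj (𝟙_ C)) ⊗ₘ (tMul T st)†) ≫
        (α_ (T.obj (𝟙_ C)) (T.obj (𝟙_ C)) (T.obj (𝟙_ C))).inv ≫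
          (tMul T st ⊗ₘ 𝟙 (T.obj (𝟙_ C))) := by
  have k := key h
  have hd := congrArg (fun f => f†) k
  simp only [dag_comp, dag_tensor, dag_id, dag_dag, assoc_unitary, ← h.map_dag, assoc]
    at hd
  rw [k, hd]
  slice_lhs 2 3 => rw [← h.frobenius]
  simp only [assoc]

lemma tmul_special (h : IsStrongFrobeniusMonad T st)
    (hsp : ∀ A : C, ((T.μ.app A)†) ≫ T.μ.app A = 𝟙 (T.obj A)) :
    ((tMul T st)†) ≫ tMul T st = 𝟙 (T.obj (𝟙_ C)) := by
  rw [tMul_eq, dag_comp, assoc]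
  slice_lhs 2 3 => rw [psi_dag_psi h]
  simp [hsp]

end SpecialAux

/-- STATEMENT 19: the equivalence `B ↦ − ⊗ B`, `T ↦ T(I)` between Frobenius monoids and
strong Frobenius monads restricts to special ones: if `B` is a special Frobenius monoid
then the writer monad `− ⊗ B` is a special (strong Frobenius) monad, and if `T` is a
special strong Frobenius monad then `T(I)` is a special Frobenius monoid. -/
theorem special_restriction {C : Type u} [Category.{v} C] [MonoidalCategory C]
    [MonoidalDagger C] :
    (∀ (B : C) (m : B ⊗ B ⟶ B) (u : 𝟙_ C ⟶ B),
      IsFrobeniusMonoid B m u → (m†) ≫ m = 𝟙 B →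
        (∀ A : C, ((wMu B m (A ⊗ B))†) ≫ (wMu B m A ⊗ₘ 𝟙 B) =
            ((wMu B m A)† ⊗ₘ 𝟙 B) ≫ wMu B m (A ⊗ B)) ∧
        (∀ A : C, ((wMu B m A)†) ≫ wMu B m A = 𝟙 (A ⊗ B))) ∧
    (∀ (T : Monad C) (st : ∀ X Y : C, X ⊗ T.obj Y ⟶ T.obj (X ⊗ Y)),
      IsStrongFrobeniusMonad T st →
        (∀ A : C, ((T.μ.app A)†) ≫ T.μ.app A = 𝟙 (T.obj A)) →
        IsFrobeniusMonoid (T.obj (𝟙_ C)) (tMul T st) (T.η.app (𝟙_ C)) ∧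
        ((tMul T st)†) ≫ tMul T st = 𝟙 (T.obj (𝟙_ C))) := by
  constructor
  · intro B m u hB hs
    exact ⟨fun A => part1a B m u hB A, fun A => part1b B m hs A⟩
  · intro T st hT hsp
    exact ⟨⟨⟨tmul_assoc hT, one_tmul hT, tmul_one hT⟩, tmul_frob hT⟩, tmul_special hT hsp⟩
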